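/- Let (z^t) be a nonnegative real sequence satisfying z^{t+1} ≤ (1 - r₁^t) z^t + r₂^t where a₁/(t+1) ≤ r₁^t ≤ 1 and 0 ≤ r₂^t ≤ a₂/(t+1)^{δ₂}, with δ₂ > 1 and a₁ > δ₂ - 1. Then z^t = O(1/t^{δ₂ - 1}). -/

import Mathlib

open Real

/-- Bernoulli-type bound: `(1 - p/T) * (T+1)^p ≤ T^p` for `T ≥ 1`, `p > 0`. -/
lemma bern_aux {T p : ℝ} (hT : 1 ≤ T) (hp : 0 < p) :
    (1 - p / T) * (T + 1) ^ p ≤ T ^ p := by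
  have hT0 : 0 < T := lt_of_lt_of_le one_pos hT
  have hT10 : 0 < T + 1 := by linarith
  have hTp1 : 0 < (T + 1) ^ p := Real.rpow_pos_of_pos hT10 p
  have key : 1 - p / T ≤ (T / (T + 1)) ^ p := by
    rcases le_total 1 p with hp1 | hp1
    · -- p ≥ 1 : lower Bernoulli with s = -1/(T+1)
      have hfrac : 1 / (T + 1) ≤ 1 := by
        rw [div_le_one hT10]; linarith
      have hs : (-1 : ℝ) ≤ -1 / (T + 1) := by
        have : -1 / (T + 1) = -(1 / (T + 1)) := by ring
        rw [this]; linarith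
      have hb := one_add_mul_self_le_rpow_one_add hs hp1
      have h1 : 1 + (-1 / (T + 1)) = T / (T + 1) := by field_simp; ring
      rw [h1] at hb
      have hmono : p / (T + 1) ≤ p / T := by
        gcongr; linarith
      have e : p * (-1 / (T + 1)) = -(p / (T + 1)) := by ring
      rw [e] at hb
      linarith
    · -- p ≤ 1 : upper Bernoulli with s = 1/T
      have hs : (-1 : ℝ) ≤ 1 / T := by
        have : (0:ℝ) ≤ 1 / T := by positivity
        linarith
      have hb := rpow_one_add_le_one_add_mul_self hs hp.le hp1
      have h1 : 1 + 1 / T = (T + 1) / T := by field_simp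
      rw [h1] at hb
      have hx1 : 0 < 1 + p * (1 / T) := by positivity
      have hrp : 0 < ((T + 1) / T) ^ p := Real.rpow_pos_of_pos (by positivity) p
      have hinv : (T / (T + 1)) ^ p = (((T + 1) / T) ^ p)⁻¹ := by
        rw [← Real.inv_rpow (by positivity)]
        congr 1
        field_simp
      rw [hinv]
      have h2 : 1 - p / T ≤ (1 + p * (1 / T))⁻¹ := by
        have e : p * (1 / T) = p / T := by ring
        rw [← one_div, le_div_iff₀ hx1, e]
        have hpt : 0 ≤ p / T := by positivity
        nlinarith [sq_nonneg (p / T)]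
      calc 1 - p / T ≤ (1 + p * (1 / T))⁻¹ := h2
        _ ≤ (((T + 1) / T) ^ p)⁻¹ := by
            exact inv_anti₀ hrp hb
  have hdiv : (T / (T + 1)) ^ p = T ^ p / (T + 1) ^ p :=
    Real.div_rpow hT0.le hT10.le p
  rw [hdiv] at key
  calc (1 - p / T) * (T + 1) ^ p ≤ (T ^ p / (T + 1) ^ p) * (T + 1) ^ p :=
        mul_le_mul_of_nonneg_right key hTp1.le
    _ = T ^ p := div_mul_cancel₀ _ hTp1.ne'

theorem recursion_rate_case2
    (z r₁ r₂ : ℕ → ℝ) (a₁ a₂ δ₂ : ℝ)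
    (ha₂ : 0 < a₂)
    (hδ₂ : 1 < δ₂) (ha₁ : δ₂ - 1 < a₁)
    (hz_nonneg : ∀ t : ℕ, 0 ≤ z t)
    (hr₁ : ∀ t : ℕ, a₁ / ((t : ℝ) + 1) ≤ r₁ t ∧ r₁ t ≤ 1)
    (hr₂ : ∀ t : ℕ, 0 ≤ r₂ t ∧ r₂ t ≤ a₂ / ((t : ℝ) + 1) ^ δ₂)
    (hrec : ∀ t : ℕ, z (t + 1) ≤ (1 - r₁ t) * z t + r₂ t) :
    ∃ C : ℝ, ∀ t : ℕ, z t ≤ C / ((t : ℝ) + 1) ^ (δ₂ - 1) := by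
  set p := δ₂ - 1 with hp_def
  have hp : 0 < p := by simp only [hp_def]; linarith
  have hap : 0 < a₁ - p := by simp only [hp_def]; linarith
  have ha10 : 0 < a₁ + 1 := by linarith
  set C : ℝ := z 0 + a₂ / (a₁ - p) + a₂ * (a₁ + 1) ^ p with hC_def
  have hq1 : 0 ≤ a₂ / (a₁ - p) := by positivity
  have hq2 : 0 ≤ a₂ * (a₁ + 1) ^ p := by positivity
  have hz0 := hz_nonneg 0
  have hC0 : 0 ≤ C := by simp only [hC_def]; linarith
  have hCa : a₂ ≤ C * (a₁ - p) := by
    have h1 : a₂ / (a₁ - p) ≤ C := by simp only [hC_def]; linarith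
    rwa [div_le_iff₀ hap] at h1
  have hCb : a₂ * (a₁ + 1) ^ p ≤ C := by simp only [hC_def]; linarith
  refine ⟨C, ?_⟩
  intro t
  induction t with
  | zero =>
    simp only [Nat.cast_zero, zero_add, Real.one_rpow, div_one]
    simp only [hC_def]; linarith
  | succ t ih =>
    have hT1 : (1:ℝ) ≤ (t : ℝ) + 1 := by
      have := Nat.cast_nonneg (α := ℝ) t
      linarith
    set T : ℝ := (t : ℝ) + 1 with hT_def
    have hT0 : 0 < T := lt_of_lt_of_le one_pos hT1
    have hT10 : 0 < T + 1 := by linarith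
    have hTp : 0 < T ^ p := Real.rpow_pos_of_pos hT0 p
    have hTp1 : 0 < (T + 1) ^ p := Real.rpow_pos_of_pos hT10 p
    have hcast : ((t + 1 : ℕ) : ℝ) + 1 = T + 1 := by push_cast; ring
    rw [hcast]
    have hr1t := (hr₁ t).1
    have hr2t := (hr₂ t).2
    have hrect := hrec t
    rw [← hT_def] at hr1t hr2t
    have hTδ : T ^ δ₂ = T ^ p * T := by
      have hpe : δ₂ = p + 1 := by simp [hp_def]
      rw [hpe, Real.rpow_add hT0, Real.rpow_one]
    rcases le_or_gt a₁ T with hcase | hcase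
    · -- main case : 1 - a₁/T ≥ 0
      have h1a : 0 ≤ 1 - a₁ / T := by
        rw [sub_nonneg, div_le_one hT0]; exact hcase
      have h3 : (1 - r₁ t) * z t ≤ (1 - a₁ / T) * z t :=
        mul_le_mul_of_nonneg_right (by linarith) (hz_nonneg t)
      have step1 : z (t + 1) ≤ (1 - a₁ / T) * z t + a₂ / T ^ δ₂ := by linarith
      have step2 : (1 - a₁ / T) * z t ≤ (1 - a₁ / T) * (C / T ^ p) :=
        mul_le_mul_of_nonneg_left ih h1a
      have key : (1 - a₁ / T) * (C / T ^ p) + a₂ / T ^ δ₂ ≤ C / (T + 1) ^ p := by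
        have e1 : (1 - a₁ / T) * (C / T ^ p) + a₂ / T ^ δ₂
            = ((1 - a₁ / T) * C + a₂ / T) / T ^ p := by
          rw [hTδ]; field_simp
        rw [e1]
        have e2 : (1 - a₁ / T) * C + (C * (a₁ - p)) / T = C * (1 - p / T) := by
          field_simp; ring
        have h5 : a₂ / T ≤ (C * (a₁ - p)) / T := by gcongr
        have h2 : (1 - a₁ / T) * C + a₂ / T ≤ C * (1 - p / T) := by linarith
        have h4 : ((1 - a₁ / T) * C + a₂ / T) / T ^ p ≤ (C * (1 - p / T)) / T ^ p := by
          gcongr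
        refine h4.trans ?_
        rw [div_le_div_iff₀ hTp hTp1]
        have hb := bern_aux hT1 hp
        calc C * (1 - p / T) * (T + 1) ^ p
            = C * ((1 - p / T) * (T + 1) ^ p) := mul_assoc _ _ _
          _ ≤ C * T ^ p := mul_le_mul_of_nonneg_left hb hC0
      calc z (t + 1) ≤ (1 - a₁ / T) * z t + a₂ / T ^ δ₂ := step1
        _ ≤ (1 - a₁ / T) * (C / T ^ p) + a₂ / T ^ δ₂ := by linarith
        _ ≤ C / (T + 1) ^ p := key
    · -- small t : 1 - a₁/T < 0
      have h1' : 1 - a₁ / T < 0 := by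
        rw [sub_neg, lt_div_iff₀ hT0]; linarith
      have h2 : (1 - r₁ t) * z t ≤ 0 :=
        mul_nonpos_of_nonpos_of_nonneg (by linarith) (hz_nonneg t)
      have h3 : z (t + 1) ≤ a₂ / T ^ δ₂ := by linarith
      have h5 : a₂ / T ^ δ₂ ≤ a₂ := by
        apply div_le_self ha₂.le
        exact Real.one_le_rpow hT1 (by linarith)
      have h6 : a₂ ≤ C / (T + 1) ^ p := by
        rw [le_div_iff₀ hTp1]
        have h7 : (T + 1) ^ p ≤ (a₁ + 1) ^ p :=
          Real.rpow_le_rpow hT10.le (by linarith) hp.le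
        calc a₂ * (T + 1) ^ p ≤ a₂ * (a₁ + 1) ^ p :=
              mul_le_mul_of_nonneg_left h7 ha₂.le
          _ ≤ C := hCb
      linarith
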